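/- Let m be a positive integer with m ≡ 2 (mod 4) and m ≥ 6, let h = (m+2)/2 and e = 3^h + 5. Then e does not belong to the 3-cyclotomic coset C_1 modulo 3^m - 1, and the 3-cyclotomic coset C_e modulo 3^m - 1 has cardinality exactly m. -/

import Mathlib

lemma geo_sum (w : ℕ) : ∑ i ∈ Finset.range w, 2 * 3 ^ i = 3 ^ w - 1 := by
  induction w with
  | zero => simp
  | succ n ih =>
    rw [Finset.sum_range_succ, ih]
    have h1 : 1 ≤ (3:ℕ) ^ n := Nat.one_le_pow _ _ (by norm_num)
    have h2 : (3:ℕ) ^ (n+1) = 3 * 3 ^ n := by rw [pow_succ]; ring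
    omega

lemma dig_aux (c p lo k : ℕ) (hlo : lo < 3 ^ p) :
    (lo + c * 3 ^ p + 3 ^ (p+1) * k) / 3 ^ p % 3 = c % 3 := by
  have hp : 0 < (3:ℕ) ^ p := pow_pos (by norm_num) p
  have he : lo + c * 3 ^ p + 3 ^ (p+1) * k = lo + (c + 3 * k) * 3 ^ p := by
    rw [pow_succ]; ring
  rw [he, Nat.add_mul_div_right _ _ hp, Nat.div_eq_of_lt hlo]
  omega

lemma digit_sum (m w : ℕ) (g : ℕ → ℕ) (hg : ∀ i, g i ≤ 2) (hw : w < m) :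
    (∑ i ∈ Finset.range m, g i * 3 ^ i) / 3 ^ w % 3 = g w := by
  have hsplit : ∑ i ∈ Finset.range (w+1), g i * 3 ^ i
      + ∑ i ∈ Finset.Ico (w+1) m, g i * 3 ^ i = ∑ i ∈ Finset.range m, g i * 3 ^ i := by
    rw [Finset.range_eq_Ico, Finset.range_eq_Ico]
    exact Finset.sum_Ico_consecutive (fun i => g i * 3 ^ i) (Nat.zero_le (w+1)) (show w+1 ≤ m by omega)
  have hdvd : (3:ℕ) ^ (w+1) ∣ ∑ i ∈ Finset.Ico (w+1) m, g i * 3 ^ i :=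
    Finset.dvd_sum fun i hi => Dvd.dvd.mul_left (pow_dvd_pow 3 (Finset.mem_Ico.mp hi).1) _
  obtain ⟨k, hk⟩ := hdvd
  have hlo : ∑ i ∈ Finset.range w, g i * 3 ^ i < 3 ^ w := by
    have h1 : ∑ i ∈ Finset.range w, g i * 3 ^ i ≤ ∑ i ∈ Finset.range w, 2 * 3 ^ i :=
      Finset.sum_le_sum fun i _ => Nat.mul_le_mul_right _ (hg i)
    have h2 : 1 ≤ (3:ℕ) ^ w := Nat.one_le_pow _ _ (by norm_num)
    rw [geo_sum] at h1
    omega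
  rw [← hsplit, Finset.sum_range_succ, hk, dig_aux _ _ _ _ hlo]
  have := hg w
  omega

lemma sum_single (m s c : ℕ) (hs : s < m) :
    ∑ i ∈ Finset.range m, (if i = s then c else 0) * 3 ^ i = c * 3 ^ s := by
  rw [Finset.sum_eq_single s (fun b _ hb => by rw [if_neg hb, zero_mul])
    (fun hsn => absurd (Finset.mem_range.mpr hs) hsn), if_pos rfl]

lemma sum_lt (m : ℕ) (g : ℕ → ℕ) (hg : ∀ i, g i ≤ 2) (j : ℕ) (hj : j < m) (hgj : g j = 0) :
    ∑ i ∈ Finset.range m, g i * 3 ^ i < 3 ^ m - 1 := by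
  have h1 : ∑ i ∈ Finset.range m, g i * 3 ^ i
      ≤ ∑ i ∈ Finset.range m, (if i = j then 0 else 2) * 3 ^ i := by
    refine Finset.sum_le_sum fun i _ => ?_
    by_cases hij : i = j
    · subst hij; rw [if_pos rfl, hgj]
    · rw [if_neg hij]; exact Nat.mul_le_mul_right _ (hg i)
  have h2 : ∑ i ∈ Finset.range m, (if i = j then 0 else 2) * 3 ^ i
      + ∑ i ∈ Finset.range m, (if i = j then 2 else 0) * 3 ^ i
      = ∑ i ∈ Finset.range m, 2 * 3 ^ i := by
    rw [← Finset.sum_add_distrib]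
    refine Finset.sum_congr rfl fun i _ => ?_
    by_cases hij : i = j <;> simp [hij]
  rw [sum_single m j 2 hj, geo_sum] at h2
  have h3 : 1 ≤ (3:ℕ) ^ j := Nat.one_le_pow _ _ (by norm_num)
  omega

lemma pow_mod3 (m k : ℕ) : (3:ℕ) ^ k ≡ 3 ^ (k % m) [MOD 3 ^ m - 1] := by
  conv_lhs => rw [← Nat.div_add_mod k m]
  rw [pow_add, pow_mul]
  have h1 : (3:ℕ) ^ m ≡ 1 [MOD 3 ^ m - 1] :=
    ((Nat.modEq_iff_dvd' (Nat.one_le_pow _ _ (by norm_num))).mpr dvd_rfl).symm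
  have h2 := (h1.pow (k / m)).mul_right (3 ^ (k % m))
  simpa using h2

lemma exists_free (s a b : ℕ) : ∃ j, j < 4 ∧ j ≠ s ∧ j ≠ a ∧ j ≠ b := by
  by_contra hc
  push_neg at hc
  have h0 := hc 0 (by norm_num)
  have h1 := hc 1 (by norm_num)
  have h2 := hc 2 (by norm_num)
  have h3 := hc 3 (by norm_num)
  omega

theorem stmt_3 (m : ℕ) (hm : 0 < m) (hmod : m % 4 = 2) (hge : 6 ≤ m)
    (h e : ℕ) (hh : h = (m + 2) / 2) (he : e = 3 ^ h + 5) :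
    e ∉ (Finset.range m).image (fun s => (1 * 3 ^ s) % (3 ^ m - 1)) ∧
    ((Finset.range m).image (fun s => (e * 3 ^ s) % (3 ^ m - 1))).card = m := by
  have hm2 : 2 * h = m + 2 := by omega
  have hhm : h < m := by omega
  have hh4 : 4 ≤ h := by omega
  constructor
  · -- e is not in C_1
    intro hmem
    obtain ⟨s, hs, hval⟩ := Finset.mem_image.mp hmem
    rw [Finset.mem_range] at hs
    have hsm : (3:ℕ) ^ s ≤ 3 ^ (m-1) := Nat.pow_le_pow_right (by norm_num) (by omega)
    have h3m : (3:ℕ) ^ m = 3 ^ (m-1) * 3 := by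
      rw [← pow_succ]; congr 1; omega
    have h1 : 1 ≤ (3:ℕ) ^ (m-1) := Nat.one_le_pow _ _ (by norm_num)
    have hlt : (3:ℕ) ^ s < 3 ^ m - 1 := by omega
    rw [one_mul, Nat.mod_eq_of_lt hlt] at hval
    rw [he] at hval
    have d1 : (3:ℕ) ∣ 3 ^ h := dvd_pow_self 3 (by omega)
    have d2 : (3:ℕ) ^ s = 1 ∨ (3:ℕ) ∣ 3 ^ s := by
      cases s with
      | zero => left; norm_num
      | succ t => right; exact dvd_pow_self 3 (Nat.succ_ne_zero t)
    omega
  · -- the coset C_e has full size m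
    have rep : ∀ s, s < m → ∃ a b, a < m ∧ b < m ∧ s ≠ a ∧ s ≠ b ∧ a ≠ b ∧
        (e * 3 ^ s) % (3 ^ m - 1) = ∑ i ∈ Finset.range m,
          ((if i = s then 2 else 0) + (if i = a then 1 else 0) + (if i = b then 1 else 0)) * 3 ^ i := by
      intro s hsm
      have haval : (s+1) % m = if s + 1 < m then s + 1 else 0 := by
        split
        · exact Nat.mod_eq_of_lt ‹_›
        · have hsm1 : s + 1 = m := by omega
          rw [hsm1, Nat.mod_self]
      have hbval : (h+s) % m = if h + s < m then h + s else h + s - m := by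
        split
        · exact Nat.mod_eq_of_lt ‹_›
        · rw [Nat.mod_eq_sub_mod (by omega)]
          exact Nat.mod_eq_of_lt (by omega)
      have hsa : s ≠ (s+1) % m := by rw [haval]; split <;> omega
      have hsb : s ≠ (h+s) % m := by rw [hbval]; split <;> omega
      have hab : (s+1) % m ≠ (h+s) % m := by rw [haval, hbval]; split <;> split <;> omega
      refine ⟨(s+1) % m, (h+s) % m, Nat.mod_lt _ hm, Nat.mod_lt _ hm, hsa, hsb, hab, ?_⟩
      set a := (s+1) % m with hadef
      set b := (h+s) % m with hbdef
      have ha : a < m := Nat.mod_lt _ hm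
      have hb : b < m := Nat.mod_lt _ hm
      have hsum : ∑ i ∈ Finset.range m,
          ((if i = s then 2 else 0) + (if i = a then 1 else 0) + (if i = b then 1 else 0)) * 3 ^ i
          = 2 * 3 ^ s + 1 * 3 ^ a + 1 * 3 ^ b := by
        have hx : ∀ i, ((if i = s then 2 else 0) + (if i = a then 1 else 0) + (if i = b then 1 else 0)) * 3 ^ i
            = (if i = s then 2 else 0) * 3 ^ i + (if i = a then 1 else 0) * 3 ^ i
              + (if i = b then 1 else 0) * 3 ^ i := fun i => by ring
        rw [Finset.sum_congr rfl fun i _ => hx i, Finset.sum_add_distrib, Finset.sum_add_distrib,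
          sum_single m s 2 hsm, sum_single m a 1 ha, sum_single m b 1 hb]
      have hcong : e * 3 ^ s ≡ 2 * 3 ^ s + 3 ^ a + 3 ^ b [MOD 3 ^ m - 1] := by
        have hexp : e * 3 ^ s = 2 * 3 ^ s + 3 ^ (s+1) + 3 ^ (h+s) := by
          rw [he, pow_add, pow_succ]; ring
        rw [hexp]
        exact ((Nat.ModEq.refl (2 * 3 ^ s)).add (pow_mod3 m (s+1))).add (pow_mod3 m (h+s))
      obtain ⟨j, hj4, hjs, hja, hjb⟩ := exists_free s a b
      have hltS : ∑ i ∈ Finset.range m,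
          ((if i = s then 2 else 0) + (if i = a then 1 else 0) + (if i = b then 1 else 0)) * 3 ^ i
          < 3 ^ m - 1 := by
        refine sum_lt m _ (fun i => ?_) j (by omega) (by simp [hjs, hja, hjb])
        split_ifs <;> omega
      have hN : 2 * 3 ^ s + 3 ^ a + 3 ^ b < 3 ^ m - 1 := by
        rw [hsum] at hltS; omega
      calc (e * 3 ^ s) % (3 ^ m - 1) = (2 * 3 ^ s + 3 ^ a + 3 ^ b) % (3 ^ m - 1) := hcong
        _ = 2 * 3 ^ s + 3 ^ a + 3 ^ b := Nat.mod_eq_of_lt hN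
        _ = _ := by rw [hsum]; ring
    have hinj : Set.InjOn (fun s => (e * 3 ^ s) % (3 ^ m - 1)) (Finset.range m) := by
      intro s hs t ht hst
      rw [Finset.mem_coe, Finset.mem_range] at hs ht
      have hst' : (e * 3 ^ s) % (3 ^ m - 1) = (e * 3 ^ t) % (3 ^ m - 1) := hst
      obtain ⟨a, b, ha, hb, hsa, hsb, hab, hreps⟩ := rep s hs
      obtain ⟨c, d, hc, hd, htc, htd, hcd, hrept⟩ := rep t ht
      rw [hreps, hrept] at hst'
      have hb1 : ∀ i, (if i = s then 2 else 0) + (if i = a then 1 else 0) + (if i = b then 1 else 0) ≤ 2 := by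
        intro i; split_ifs <;> omega
      have hb2 : ∀ i, (if i = t then 2 else 0) + (if i = c then 1 else 0) + (if i = d then 1 else 0) ≤ 2 := by
        intro i; split_ifs <;> omega
      have hdig : ((if s = s then 2 else 0) + (if s = a then 1 else 0) + (if s = b then 1 else 0) : ℕ)
          = (if s = t then 2 else 0) + (if s = c then 1 else 0) + (if s = d then 1 else 0) :=
        ((digit_sum m s _ hb1 hs).symm.trans
          (congrArg (fun x => x / 3 ^ s % 3) hst')).trans (digit_sum m s _ hb2 hs)
      split_ifs at hdig <;> omega
    rw [Finset.card_image_of_injOn hinj, Finset.card_range]
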